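/- Let F be a field and let α ∈ F be such that the Weierstrass curve E : y² = x³ + (1 − 2α)x² + α²x over F is nonsingular (i.e., its discriminant is nonzero). Then the point P = (α, α) lies on E, has exact order 4 in the group of points E(F), and 2P = (0, 0); in particular the x-coordinate of 2P equals 0. -/

import Mathlib

/-- The `x`-coordinate of a nonsingular rational point on a Weierstrass curve
(with the point at infinity sent to `0`). -/
noncomputable def ptX {F : Type*} [Field F] {W : WeierstrassCurve.Affine F} : W.Point → F
  | .zero => 0
  | .some x _ _ => x

open scoped Classical in
open WeierstrassCurve.Affine WeierstrassCurve.Affine.Point in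
/-- **The second `m = 4` family of Table 2 ([FMW, Lem. 3.1]).** On the nonsingular Weierstrass
curve `y² = x³ + (1 - 2α)x² + α²x`, the point `P = (α, α)` is a nonsingular point of exact
order 4, with `2P = (0, 0)`; in particular the `x`-coordinate of `2P` is `0`. -/
theorem order_four_family' {F : Type*} [Field F] (α : F)
    (W : WeierstrassCurve.Affine F)
    (hW : W = { a₁ := 0, a₂ := 1 - 2 * α, a₃ := 0, a₄ := α ^ 2, a₆ := 0 })
    (hΔ : W.Δ ≠ 0) :
    ∃ h : W.Nonsingular α α, addOrderOf (WeierstrassCurve.Affine.Point.some α α h) = 4 ∧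
      (∃ h₀ : W.Nonsingular 0 0,
        2 • WeierstrassCurve.Affine.Point.some α α h = WeierstrassCurve.Affine.Point.some 0 0 h₀) ∧
      ptX (2 • WeierstrassCurve.Affine.Point.some α α h) = 0 := by
  subst hW
  set W : WeierstrassCurve.Affine F :=
    { a₁ := 0, a₂ := 1 - 2 * α, a₃ := 0, a₄ := α ^ 2, a₆ := 0 } with hWdef
  have hΔval : W.Δ = 16 * (1 - 2 * α) ^ 2 * α ^ 4 - 64 * α ^ 6 := by
    simp only [WeierstrassCurve.Δ, WeierstrassCurve.b₂, WeierstrassCurve.b₄,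
      WeierstrassCurve.b₆, WeierstrassCurve.b₈, hWdef]
    ring
  have h2 : (2 : F) ≠ 0 := by
    intro h; apply hΔ; rw [hΔval]
    linear_combination (8 * (1 - 2*α)^2 * α^4 - 32 * α^6) * h
  have hα : α ≠ 0 := by
    intro h; apply hΔ; rw [hΔval, h]; ring
  have hP : W.Equation α α := by
    rw [equation_iff]; simp only [hWdef]; ring
  have h : W.Nonsingular α α := (equation_iff_nonsingular_of_Δ_ne_zero (W := W) hΔ).mp hP
  have h₀ : W.Nonsingular 0 0 := by
    apply (equation_iff_nonsingular_of_Δ_ne_zero (W := W) hΔ).mp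
    rw [equation_iff]; simp only [hWdef]; ring
  have hnegY : W.negY α α = -α := by simp [negY, hWdef]
  have hy : α ≠ W.negY α α := by
    rw [hnegY]; intro hc
    have h2α : (2 : F) * α = 0 := by linear_combination hc
    exact (mul_eq_zero.mp h2α).elim h2 hα
  have hslope : W.slope α α α α = 1 := by
    rw [slope_of_Y_ne rfl hy, hnegY]
    have hden : α - -α ≠ 0 := by
      intro hc
      have h2α : (2 : F) * α = 0 := by linear_combination hc
      exact (mul_eq_zero.mp h2α).elim h2 hα
    rw [div_eq_one_iff_eq hden]
    simp only [hWdef]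
    ring
  have haddX : W.addX α α (W.slope α α α α) = 0 := by
    rw [hslope, addX]; simp only [hWdef]; ring
  have haddY : W.addY α α α (W.slope α α α α) = 0 := by
    rw [addY, negAddY, haddX, hslope, negY]; simp only [hWdef]; ring
  have hcongr : ∀ (x y : F) (hxy : W.Nonsingular x y), x = 0 → y = 0 →
      Point.some x y hxy = Point.some 0 0 h₀ := by
    rintro x y hxy rfl rfl; rfl
  have h2P : (2 : ℕ) • Point.some α α h = Point.some 0 0 h₀ := by
    rw [two_nsmul, add_of_Y_ne hy]
    exact hcongr _ _ _ haddX haddY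
  have hnegY0 : W.negY 0 0 = 0 := by simp [negY, hWdef]
  have h4P : (4 : ℕ) • Point.some α α h = 0 := by
    have : (4 : ℕ) = 2 + 2 := rfl
    rw [this, add_nsmul, h2P, add_of_Y_eq rfl hnegY0.symm]
  refine ⟨h, ?_, ⟨h₀, h2P⟩, by rw [h2P]; rfl⟩
  haveI : Fact (Nat.Prime 2) := ⟨Nat.prime_two⟩
  have key := addOrderOf_eq_prime_pow (p := 2) (n := 1)
    (by rw [pow_one, h2P]; exact fun hc => by simp at hc)
    (by rw [show ((2 : ℕ) ^ (1 + 1)) = 4 from rfl]; exact h4P)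
  rw [key]; norm_num
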